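/- arXiv:math/0208121 — 2 statements merged into one kernel-verified Lean document; each statement's English description precedes it below -/
import Mathlib

section
/- Let λ > 0 and let h₊(t) = 2cos(2πλt) − 1_{(−λ,λ)}(t) g₊(t) − 2∫₀^λ cos(2πts) g₊(s) ds, where g₊ = g_{+1}. Define the tempered distribution A_λ by ⟨A_λ, χ⟩ = χ(λ) + χ(−λ) + ∫_ℝ h₊(t) χ(t) dt for Schwartz functions χ (the integral converges absolutely). Then: (i) ⟨A_λ, ℱχ⟩ = ⟨A_λ, χ⟩ for every Schwartz function χ (A_λ is invariant under the Fourier transform); (ii) ⟨A_λ, χ⟩ = 0 for every Schwartz function χ with support contained in (−λ,λ); consequently also ⟨A_λ, ℱχ⟩ = 0 for every such χ, i.e. A_λ has the Sonine property. -/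
open MeasureTheory Complex Set FourierTransform

noncomputable section

/-- `F` is the Fourier–Plancherel transform on `L²(ℝ)`: the unitary operator agreeing with
the Fourier integral `x ↦ ∫ y, exp(2πixy) f y` on integrable square-integrable functions. -/
def IsFourierPlancherel
    (F : Lp ℂ 2 (volume : Measure ℝ) ≃ₗᵢ[ℂ] Lp ℂ 2 (volume : Measure ℝ)) : Prop :=
  ∀ (f : ℝ → ℂ) (_ : Integrable f volume) (hf : MemLp f 2 volume),
    (F (hf.toLp f) : ℝ → ℂ) =ᵐ[volume] 𝓕⁻ f

/-- `P_λ` : multiplication by the indicator function of `(-λ, λ)` on `L²(ℝ)`. -/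
def Pproj (lam : ℝ) (f : Lp ℂ 2 (volume : Measure ℝ)) : Lp ℂ 2 (volume : Measure ℝ) :=
  ((Lp.memLp f).indicator (measurableSet_Ioo : MeasurableSet (Ioo (-lam) lam))).toLp _


/-- The operator `F_λ = P_λ ℱ P_λ`. -/
def Fop (lam : ℝ)
    (F : Lp ℂ 2 (volume : Measure ℝ) ≃ₗᵢ[ℂ] Lp ℂ 2 (volume : Measure ℝ))
    (f : Lp ℂ 2 (volume : Measure ℝ)) : Lp ℂ 2 (volume : Measure ℝ) :=
  Pproj lam (F (Pproj lam f))

/-- `h₊(t) = 2cos(2πλt) − 1_{(−λ,λ)}(t)g₊(t) − 2∫₀^λ cos(2πts) g₊(s) ds`. -/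
def hplus (lam : ℝ) (g : Lp ℂ 2 (volume : Measure ℝ)) : ℝ → ℂ := fun t =>
  2 * Real.cos (2 * Real.pi * lam * t) - Set.indicator (Ioo (-lam) lam) (⇑g) t -
    2 * ∫ s in (0:ℝ)..lam, (Real.cos (2 * Real.pi * t * s) : ℂ) * g s

/-- The pairing `⟨A_λ, χ⟩ = χ(λ) + χ(−λ) + ∫_ℝ h(t) χ(t) dt`. -/
def pairingA (lam : ℝ) (h : ℝ → ℂ) (χ : ℝ → ℂ) : ℂ :=
  χ lam + χ (-lam) + ∫ t : ℝ, h t * χ t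


open scoped Real

namespace AlambdaSonineAux

private lemma hL_cont : Continuous fun p : ℝ × ℝ => (-(innerₗ ℝ)) p.1 p.2 := by
  have : (fun p : ℝ × ℝ => (-(innerₗ ℝ)) p.1 p.2) = fun p : ℝ × ℝ => -(p.1 * p.2) := by
    ext p; simp [RCLike.inner_apply, starRingEnd_apply, mul_comm]
  rw [this]; exact (continuous_fst.mul continuous_snd).neg

/-- Multiplication formula for the inverse Fourier transform. -/
private lemma integral_fourierInv_mul (f u : ℝ → ℂ) (hf : Integrable f volume)
    (hu : Integrable u volume) :
    ∫ t, 𝓕⁻ f t * u t = ∫ t, f t * 𝓕⁻ u t := by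
  have hflip : (-(innerₗ ℝ)).flip = -(innerₗ ℝ) := by
    refine LinearMap.ext fun x => LinearMap.ext fun y => ?_
    simp [real_inner_comm, mul_comm]
  have key := VectorFourier.integral_fourierIntegral_smul_eq_flip
      (μ := volume) (ν := volume) (L := -(innerₗ ℝ)) (f := f) (g := u)
      Real.continuous_fourierChar hL_cont hf hu
  rw [hflip] at key
  simp only [smul_eq_mul] at key
  exact key

private lemma fourierInv_eq_integral (f : ℝ → ℂ) (w : ℝ) :
    𝓕⁻ f w
      = ∫ v : ℝ, Complex.exp (((2 * Real.pi * (v * w) : ℝ) : ℂ) * Complex.I) * f v := by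
  rw [Real.fourierInv_eq']
  simp [smul_eq_mul, RCLike.inner_apply, starRingEnd_apply, mul_comm]

private lemma two_cos_complex (a : ℝ) :
    (2 * Real.cos a : ℂ)
      = Complex.exp ((a : ℂ) * Complex.I) + Complex.exp (-(a : ℂ) * Complex.I) := by
  rw [Complex.exp_mul_I, Complex.exp_mul_I, Complex.cos_neg, Complex.sin_neg,
    ← Complex.ofReal_cos]
  ring

private lemma fourierInv_continuous (f : ℝ → ℂ) (hf : Integrable f volume) :
    Continuous (𝓕⁻ f) :=
  VectorFourier.fourierIntegral_continuous Real.continuous_fourierChar hL_cont hf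

private lemma fourierInv_norm_le (f : ℝ → ℂ) (t : ℝ) :
    ‖𝓕⁻ f t‖ ≤ ∫ x, ‖f x‖ :=
  VectorFourier.norm_fourierIntegral_le_integral_norm _ _ _ _ _

private lemma schwartz_bound (χ : SchwartzMap ℝ ℂ) : ∃ C, ∀ x, ‖χ x‖ ≤ C := by
  obtain ⟨C, hC⟩ := χ.decay 0 0
  exact ⟨C, fun x => by simpa using hC.2 x⟩

private lemma exp_mul_integrable (u : ℝ → ℂ) (hu : Integrable u volume) (a : ℝ) :
    Integrable (fun t : ℝ =>
      Complex.exp (((2 * Real.pi * (t * a) : ℝ) : ℂ) * Complex.I) * u t) volume := by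
  refine hu.bdd_mul (c := 1) ?_ (Filter.Eventually.of_forall fun t => ?_)
  · exact (Complex.continuous_exp.comp
      ((Complex.continuous_ofReal.comp (by continuity)).mul continuous_const)).aestronglyMeasurable
  · rw [Complex.norm_exp_ofReal_mul_I]

end AlambdaSonineAux

open AlambdaSonineAux

/-- The distribution `A_λ = δ_λ + δ_{−λ} + h₊` is Fourier invariant and has the
Sonine property: it vanishes, together with its Fourier transform, on `(−λ,λ)`. -/
theorem Alambda_sonine (lam : ℝ) (hlam : 0 < lam)
    (F : Lp ℂ 2 (volume : Measure ℝ) ≃ₗᵢ[ℂ] Lp ℂ 2 (volume : Measure ℝ))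
    (hF : IsFourierPlancherel F)
    (g : Lp ℂ 2 (volume : Measure ℝ))
    (hge : ∀ᵐ x : ℝ, g (-x) = g x)
    (hgs : ∀ᵐ x : ℝ, x ∉ Ioo (-lam) lam → g x = 0)
    (hg : ∀ᵐ t : ℝ, g t + (Fop lam F g) t =
      Set.indicator (Ioo (-lam) lam)
        (fun s : ℝ => (2 * Real.cos (2 * Real.pi * lam * s) : ℂ)) t) :
    (∀ χ : SchwartzMap ℝ ℂ, Integrable (fun t : ℝ => hplus lam g t * χ t) volume) ∧
    (∀ χ : SchwartzMap ℝ ℂ,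
      pairingA lam (hplus lam g) (𝓕⁻ (χ : ℝ → ℂ)) =
        pairingA lam (hplus lam g) (χ : ℝ → ℂ)) ∧
    (∀ χ : SchwartzMap ℝ ℂ, tsupport (χ : ℝ → ℂ) ⊆ Ioo (-lam) lam →
      pairingA lam (hplus lam g) (χ : ℝ → ℂ) = 0 ∧
      pairingA lam (hplus lam g) (𝓕⁻ (χ : ℝ → ℂ)) = 0) := by
  classical
  have hπ := Real.pi_pos
  set S : Set ℝ := Ioo (-lam) lam with hSdef
  set c : ℝ → ℂ := fun t => (2 * Real.cos (2 * Real.pi * lam * t) : ℂ) with hcdef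
  set G : ℝ → ℂ := S.indicator ⇑g with hGdef
  have hGmeas : MemLp G 2 volume := (Lp.memLp g).indicator measurableSet_Ioo
  have hGint : Integrable G volume :=
    (integrable_indicator_iff measurableSet_Ioo).2
      (((Lp.memLp g).restrict _).integrable one_le_two)
  have hGg : G =ᵐ[volume] ⇑g := by
    filter_upwards [hgs] with x hx
    by_cases h : x ∈ S
    · simp [hGdef, indicator_of_mem h]
    · simp [hGdef, indicator_of_notMem h, hx h]
  have hGeven : ∀ᵐ x : ℝ, G (-x) = G x := by
    filter_upwards [hge] with x hx
    by_cases h : x ∈ S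
    · have h' : -x ∈ S := by
        simp only [hSdef, mem_Ioo] at h ⊢; constructor <;> linarith [h.1, h.2]
      simp [hGdef, indicator_of_mem h, indicator_of_mem h', hx]
    · have h' : -x ∉ S := by
        simp only [hSdef, mem_Ioo] at h ⊢
        intro h1; exact h ⟨by linarith [h1.1, h1.2], by linarith [h1.1, h1.2]⟩
      simp [hGdef, indicator_of_notMem h, indicator_of_notMem h']
  have hgII : ∀ (f : ℝ → ℂ), Continuous f → ∀ a b : ℝ,
      IntervalIntegrable (fun s => f s * g s) volume a b := by
    intro f hf a b
    have hg0 : IntervalIntegrable (⇑g) volume a b := by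
      rw [intervalIntegrable_iff, show Set.uIoc a b = Set.Ioc (a ⊓ b) (a ⊔ b) from rfl]
      exact ((Lp.memLp g).restrict _).integrable one_le_two
    exact hg0.continuousOn_mul hf.continuousOn
  have hK : ∀ t : ℝ,
      (2 * ∫ s in (0:ℝ)..lam, (Real.cos (2 * Real.pi * t * s) : ℂ) * g s)
        = 𝓕⁻ G t := by
    intro t
    have hEcont : Continuous fun s : ℝ =>
        Complex.exp (((2 * Real.pi * (s * t) : ℝ) : ℂ) * Complex.I) :=
      Complex.continuous_exp.comp
        ((Complex.continuous_ofReal.comp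
          (continuous_const.mul (continuous_id.mul continuous_const))).mul continuous_const)
    set E : ℝ → ℂ := fun s => Complex.exp (((2 * Real.pi * (s * t) : ℝ) : ℂ) * Complex.I)
      with hEdef
    have h1 : 𝓕⁻ G t = ∫ s in (-lam)..lam, E s * g s := by
      rw [fourierInv_eq_integral]
      have heq : (fun s => E s * G s) = S.indicator (fun s => E s * g s) := by
        ext s; by_cases h : s ∈ S <;>
          simp [hGdef, indicator_of_mem, indicator_of_notMem, h]
      calc (∫ v : ℝ, Complex.exp (((2 * Real.pi * (v * t) : ℝ) : ℂ) * Complex.I) * G v)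
          = ∫ s : ℝ, S.indicator (fun s => E s * g s) s := by rw [← heq]
        _ = ∫ s in S, E s * g s := integral_indicator measurableSet_Ioo
        _ = ∫ s in Ioc (-lam) lam, E s * g s := (integral_Ioc_eq_integral_Ioo).symm
        _ = ∫ s in (-lam)..lam, E s * g s :=
            (intervalIntegral.integral_of_le (by linarith)).symm
    have h2 : (∫ s in (-lam)..lam, E s * g s)
        = (∫ s in (-lam)..(0:ℝ), E s * g s) + ∫ s in (0:ℝ)..lam, E s * g s :=
      (intervalIntegral.integral_add_adjacent_intervals
        (hgII E hEcont _ _) (hgII E hEcont _ _)).symm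
    have h3 : (∫ s in (-lam)..(0:ℝ), E s * g s)
        = ∫ s in (0:ℝ)..lam, E (-s) * g s := by
      rw [show (∫ s in (-lam)..(0:ℝ), E s * g s)
          = ∫ s in -(lam)..(-(0:ℝ)), E s * g s by norm_num]
      rw [← intervalIntegral.integral_comp_neg (fun s => E s * g s)]
      refine intervalIntegral.integral_congr_ae ?_
      filter_upwards [hge] with s hs _
      rw [hs]
    have h4 : (∫ s in (0:ℝ)..lam, E s * g s) + (∫ s in (0:ℝ)..lam, E (-s) * g s)
        = ∫ s in (0:ℝ)..lam, (E s + E (-s)) * g s := by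
      rw [← intervalIntegral.integral_add (hgII E hEcont _ _)
        (hgII (fun s => E (-s)) (hEcont.comp continuous_neg) _ _)]
      congr 1; ext s; ring
    have h5 : ∀ s : ℝ, E s + E (-s) = 2 * (Real.cos (2 * Real.pi * t * s) : ℂ) := by
      intro s
      have hE1 : E s = Complex.exp (((2 * Real.pi * (s * t) : ℝ) : ℂ) * Complex.I) := rfl
      have hE2 : E (-s) = Complex.exp (-((2 * Real.pi * (s * t) : ℝ) : ℂ) * Complex.I) := by
        have hcast : ((2 * Real.pi * (-s * t) : ℝ) : ℂ)
            = -((2 * Real.pi * (s * t) : ℝ) : ℂ) := by push_cast; ring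
        show Complex.exp (((2 * Real.pi * (-s * t) : ℝ) : ℂ) * Complex.I) = _
        rw [hcast]
      rw [hE1, hE2, show (2 * Real.pi * t * s) = 2 * Real.pi * (s * t) by ring]
      exact (two_cos_complex _).symm
    calc (2 * ∫ s in (0:ℝ)..lam, (Real.cos (2 * Real.pi * t * s) : ℂ) * g s)
        = ∫ s in (0:ℝ)..lam, 2 * (Real.cos (2 * Real.pi * t * s) : ℂ) * g s := by
          rw [← intervalIntegral.integral_const_mul]
          congr 1; ext s; ring
      _ = ∫ s in (0:ℝ)..lam, (E s + E (-s)) * g s := by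
          refine intervalIntegral.integral_congr fun s _ => ?_
          rw [h5 s]
      _ = 𝓕⁻ G t := by rw [← h4, ← h3, add_comm, ← h2, ← h1]
  have hplus_eq : ∀ t : ℝ, hplus lam g t = c t - G t - 𝓕⁻ G t := by
    intro t
    rw [← hK t]
    rfl
  have hccont : Continuous c := by
    rw [hcdef]
    exact continuous_const.mul (Complex.continuous_ofReal.comp
      (Real.continuous_cos.comp (continuous_const.mul continuous_id)))
  have hint1 : ∀ u : SchwartzMap ℝ ℂ, Integrable (fun t => c t * u t) volume := by
    intro u
    refine u.integrable.bdd_mul (c := 2) hccont.aestronglyMeasurable (Filter.Eventually.of_forall fun t => ?_)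
    rw [hcdef]
    simp only [norm_mul, Complex.norm_real]
    calc ‖(2:ℂ)‖ * |Real.cos (2 * Real.pi * lam * t)|
        ≤ 2 * 1 := by
          rw [show ‖(2:ℂ)‖ = 2 by norm_num]
          exact mul_le_mul_of_nonneg_left (Real.abs_cos_le_one _) (by norm_num)
      _ = 2 := by norm_num
  have hint2 : ∀ u : SchwartzMap ℝ ℂ, Integrable (fun t => G t * u t) volume := by
    intro u
    obtain ⟨C, hC⟩ := schwartz_bound u
    exact (hGint.bdd_mul u.continuous.aestronglyMeasurable (Filter.Eventually.of_forall hC)).congr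
      (Filter.Eventually.of_forall fun t => mul_comm _ _)
  have hint3 : ∀ u : SchwartzMap ℝ ℂ,
      Integrable (fun t => 𝓕⁻ G t * u t) volume := fun u =>
    u.integrable.bdd_mul (fourierInv_continuous G hGint).aestronglyMeasurable
      (Filter.Eventually.of_forall (fourierInv_norm_le G))
  have hintAll : ∀ u : SchwartzMap ℝ ℂ,
      Integrable (fun t => hplus lam g t * u t) volume := by
    intro u
    refine (((hint1 u).sub (hint2 u)).sub (hint3 u)).congr
      (Filter.Eventually.of_forall fun t => ?_)
    simp only [Pi.sub_apply]
    rw [hplus_eq t]; ring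
  have hsplit : ∀ u : SchwartzMap ℝ ℂ,
      (∫ t, hplus lam g (t : ℝ) * u t)
        = (∫ t, c t * u t) - (∫ t, G t * u t)
          - ∫ t, 𝓕⁻ G t * u t := by
    intro u
    rw [show (fun t => hplus lam g t * u t)
        = fun t => (c t * u t - G t * u t) - 𝓕⁻ G t * u t from
      funext fun t => by rw [hplus_eq t]; ring]
    have hi12 : Integrable (fun t : ℝ => c t * u t - G t * u t) volume :=
      (hint1 u).sub (hint2 u)
    rw [integral_sub hi12 (hint3 u), integral_sub (hint1 u) (hint2 u)]
  have hpairc : ∀ u : ℝ → ℂ, Integrable u volume →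
      (∫ t, c t * u t)
        = 𝓕⁻ u lam + 𝓕⁻ u (-lam) := by
    intro u hu
    rw [fourierInv_eq_integral u lam, fourierInv_eq_integral u (-lam),
      ← integral_add (exp_mul_integrable u hu lam) (exp_mul_integrable u hu (-lam))]
    refine integral_congr_ae (Filter.Eventually.of_forall fun t => ?_)
    have ha : (2 * Real.cos (2 * Real.pi * (t * lam)) : ℂ)
        = Complex.exp (((2 * Real.pi * (t * lam) : ℝ) : ℂ) * Complex.I)
          + Complex.exp (-((2 * Real.pi * (t * lam) : ℝ) : ℂ) * Complex.I) :=
      two_cos_complex (2 * Real.pi * (t * lam))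
    have hneg : ((2 * Real.pi * (t * -lam) : ℝ) : ℂ)
        = -((2 * Real.pi * (t * lam) : ℝ) : ℂ) := by push_cast; ring
    rw [hcdef]
    simp only
    rw [show 2 * Real.pi * lam * t = 2 * Real.pi * (t * lam) by ring, hneg, ha]
    ring
  have main : ∀ χ : SchwartzMap ℝ ℂ,
      pairingA lam (hplus lam g) (𝓕⁻ (χ : ℝ → ℂ))
        = pairingA lam (hplus lam g) (χ : ℝ → ℂ) := by
    intro χ
    set χ' : SchwartzMap ℝ ℂ := (FourierTransform.fourierCLE ℂ (SchwartzMap ℝ ℂ)).symm χ with hχ'def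
    have hχ' : ⇑χ' = 𝓕⁻ ⇑χ :=
      by rw [hχ'def, FourierTransform.fourierCLE_symm_apply, SchwartzMap.fourierInv_coe]
    have hFχint : Integrable (𝓕 ⇑χ) volume := by
      have h := (SchwartzMap.fourierTransformCLM ℂ (E := ℂ) (V := ℝ) χ).integrable (μ := volume)
      rwa [SchwartzMap.fourierTransformCLM_apply] at h
    have hinv : 𝓕 (𝓕⁻ ⇑χ) = ⇑χ :=
      Continuous.fourier_fourierInv_eq χ.continuous χ.integrable hFχint
    have h2inv : ∀ t : ℝ, 𝓕⁻ (⇑χ') t = χ (-t) := by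
      intro t
      rw [hχ', Real.fourierInv_eq_fourier_neg, hinv]
    have hA : χ' lam + χ' (-lam) = ∫ t, c t * χ t := by
      rw [hχ']
      exact (hpairc ⇑χ χ.integrable).symm
    have hB : (∫ t, c t * χ' t) = χ lam + χ (-lam) := by
      rw [hpairc ⇑χ' χ'.integrable, h2inv, h2inv]
      simp [add_comm]
    have hC : (∫ t, G t * χ' t) = ∫ t, 𝓕⁻ G t * χ t := by
      rw [hχ']
      exact (integral_fourierInv_mul G ⇑χ hGint χ.integrable).symm
    have hD : (∫ t, 𝓕⁻ G t * χ' t) = ∫ t, G t * χ t := by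
      calc (∫ t, 𝓕⁻ G t * χ' t)
          = ∫ t, G t * 𝓕⁻ (⇑χ') t :=
            integral_fourierInv_mul G ⇑χ' hGint χ'.integrable
        _ = ∫ t, G t * χ (-t) := by
            refine integral_congr_ae (Filter.Eventually.of_forall fun t => ?_)
            simp only [h2inv]
        _ = ∫ t, G (-t) * χ t := by
            rw [← integral_neg_eq_self (fun t => G (-t) * χ t) volume]
            simp
        _ = ∫ t, G t * χ t := by
            refine integral_congr_ae ?_
            filter_upwards [hGeven] with t ht
            rw [ht]
    have hgoal : pairingA lam (hplus lam g) (χ' : ℝ → ℂ)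
        = pairingA lam (hplus lam g) (χ : ℝ → ℂ) := by
      rw [pairingA, pairingA, hsplit χ, hsplit χ', hA, hB, hC, hD]
      ring
    rw [← hχ']
    exact hgoal
  refine ⟨hintAll, main, ?_⟩
  have hPge : ⇑(F (Pproj lam g)) =ᵐ[volume] 𝓕⁻ G :=
    hF G hGint hGmeas
  have hFop : ⇑(Fop lam F g) =ᵐ[volume] S.indicator (𝓕⁻ G) := by
    have h1 : ⇑(Fop lam F g) =ᵐ[volume] S.indicator ⇑(F (Pproj lam g)) :=
      by unfold Fop Pproj; exact MemLp.coeFn_toLp _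
    exact h1.trans (hPge.indicator (s := S))
  have hzero : ∀ᵐ t : ℝ, t ∈ S → hplus lam g t = 0 := by
    filter_upwards [hg, hFop] with t h1 h2 ht
    rw [h2, indicator_of_mem ht, indicator_of_mem ht] at h1
    have hGt : G t = ⇑g t := by rw [hGdef]; exact indicator_of_mem ht _
    rw [hplus_eq t, ← h1, hGt]
    ring
  intro χ hsupp
  have hnm : ∀ x : ℝ, x ∉ S → χ x = 0 := fun x hx =>
    image_eq_zero_of_notMem_tsupport fun hmem => hx (hsupp hmem)
  have hlpos : (χ : ℝ → ℂ) lam = 0 := hnm lam (by simp [hSdef])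
  have hlneg : (χ : ℝ → ℂ) (-lam) = 0 := hnm (-lam) (by simp [hSdef, hlam.le, hlam])
  have hI0 : (∫ t, hplus lam g t * χ t) = 0 := by
    have hae : (fun t => hplus lam g t * χ t) =ᵐ[volume] (fun _ => (0:ℂ)) := by
      filter_upwards [hzero] with t ht
      by_cases hmem : t ∈ S
      · rw [ht hmem, zero_mul]
      · rw [hnm t hmem, mul_zero]
    rw [integral_congr_ae hae, integral_zero]
  constructor
  · rw [pairingA, hlpos, hlneg, hI0]; ring
  · rw [main χ, pairingA, hlpos, hlneg, hI0]; ring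
end
end

section
/- Let λ > 0 and let h₋(t) = −2cos(2πλt) + 1_{(−λ,λ)}(t) g₋(t) − 2∫₀^λ cos(2πts) g₋(s) ds, where g₋ = g_{−1}. Define the tempered distribution B by ⟨B, χ⟩ = χ(λ) + χ(−λ) + ∫_ℝ h₋(t) χ(t) dt for Schwartz functions χ (the integral converges absolutely). Then: (i) ⟨B, ℱχ⟩ = −⟨B, χ⟩ for every Schwartz function χ (B is anti-invariant under the Fourier transform); (ii) ⟨B, χ⟩ = 0 for every Schwartz function χ with support contained in (−λ,λ); consequently also ⟨B, ℱχ⟩ = 0 for every such χ, i.e. B has the Sonine property. -/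
open MeasureTheory Complex Set FourierTransform

noncomputable section

/-- `h₋(t) = −2cos(2πλt) + 1_{(−λ,λ)}(t)g₋(t) − 2∫₀^λ cos(2πts) g₋(s) ds`. -/
def hminus (lam : ℝ) (g : Lp ℂ 2 (volume : Measure ℝ)) : ℝ → ℂ := fun t =>
  -(2 * Real.cos (2 * Real.pi * lam * t)) + Set.indicator (Ioo (-lam) lam) (⇑g) t -
    2 * ∫ s in (0:ℝ)..lam, (Real.cos (2 * Real.pi * t * s) : ℂ) * g s

/-- The pairing `⟨B, χ⟩ = χ(λ) + χ(−λ) + ∫_ℝ h(t) χ(t) dt`. -/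
def pairingB (lam : ℝ) (h : ℝ → ℂ) (χ : ℝ → ℂ) : ℂ :=
  χ lam + χ (-lam) + ∫ t : ℝ, h t * χ t

section BlambdaAux

open Real

variable (lam : ℝ) (g : Lp ℂ 2 (volume : Measure ℝ))

/-- Auxiliary: the truncation `G = 1_{(-λ,λ)} g`. -/
noncomputable def Gfun : ℝ → ℂ := Set.indicator (Ioo (-lam) lam) (⇑g)

lemma Gfun_integrable : Integrable (Gfun lam g) := by
  rw [Gfun, integrable_indicator_iff measurableSet_Ioo]
  have h2 : MemLp (⇑g) 2 (volume.restrict (Ioo (-lam) lam)) :=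
    (Lp.memLp g).restrict _
  haveI : IsFiniteMeasure (volume.restrict (Ioo (-lam) lam)) := by
    constructor
    rw [Measure.restrict_apply_univ]
    exact (Real.volume_Ioo ▸ ENNReal.ofReal_lt_top : volume (Ioo (-lam) lam) < ⊤)
  exact h2.integrable (by norm_num)

lemma Gfun_even (hge : ∀ᵐ x : ℝ, g (-x) = g x) :
    ∀ᵐ x : ℝ, Gfun lam g (-x) = Gfun lam g x := by
  filter_upwards [hge] with x hx
  have hmem : (-x ∈ Ioo (-lam) lam) ↔ (x ∈ Ioo (-lam) lam) := by
    simp only [mem_Ioo]; constructor <;> intro ⟨h1, h2⟩ <;> constructor <;> linarith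
  by_cases h : x ∈ Ioo (-lam) lam
  · rw [Gfun, Set.indicator_of_mem (hmem.2 h), Set.indicator_of_mem h, hx]
  · rw [Gfun, Set.indicator_of_notMem (fun hc => h (hmem.1 hc)), Set.indicator_of_notMem h]

lemma gIntOn : IntegrableOn (⇑g) (Ioo (-lam) lam) volume := by
  have := Gfun_integrable lam g
  rwa [Gfun, integrable_indicator_iff measurableSet_Ioo] at this

lemma expMul_integrableOn (c : ℝ) (s : Set ℝ) (hs : s ⊆ Ioo (-lam) lam) :
    IntegrableOn (fun v : ℝ => Complex.exp ((c * v : ℝ) * Complex.I) * g v) s volume := by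
  apply Integrable.bdd_mul ((gIntOn lam g).mono_set hs)
  · exact (Complex.continuous_exp.comp (by continuity)).aestronglyMeasurable
  · exact Filter.Eventually.of_forall (fun v => le_of_eq (Complex.norm_exp_ofReal_mul_I _))

lemma fourierInv_Gfun_eq (hlam : 0 < lam) (hge : ∀ᵐ x : ℝ, g (-x) = g x) (t : ℝ) :
    𝓕⁻ (Gfun lam g) t = 2 * ∫ s in (0:ℝ)..lam, (Real.cos (2 * Real.pi * t * s) : ℂ) * g s := by
  have key : ∀ x : ℝ, Complex.exp ((-(2 * Real.pi * t) * x : ℝ) * Complex.I)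
      + Complex.exp ((2 * Real.pi * t * x : ℝ) * Complex.I)
      = 2 * (Real.cos (2 * Real.pi * t * x) : ℂ) := by
    intro x
    rw [Complex.ofReal_cos, Complex.two_cos]
    push_cast
    ring_nf
  have hint1 : IntervalIntegrable (fun v : ℝ => Complex.exp ((2 * Real.pi * t * v : ℝ) * Complex.I) * g v) volume 0 lam := by
    rw [intervalIntegrable_iff_integrableOn_Ioo_of_le hlam.le]
    exact expMul_integrableOn lam g _ _ (fun x hx => ⟨by simp at hx ⊢; linarith [hx.1], hx.2⟩)
  have hint2 : IntervalIntegrable (fun v : ℝ => Complex.exp ((-(2 * Real.pi * t) * v : ℝ) * Complex.I) * g v) volume 0 lam := by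
    rw [intervalIntegrable_iff_integrableOn_Ioo_of_le hlam.le]
    exact expMul_integrableOn lam g _ _ (fun x hx => ⟨by simp at hx ⊢; linarith [hx.1], hx.2⟩)
  have hint3 : IntervalIntegrable (fun v : ℝ => Complex.exp ((2 * Real.pi * t * v : ℝ) * Complex.I) * g v) volume (-lam) 0 := by
    rw [intervalIntegrable_iff_integrableOn_Ioo_of_le (by linarith)]
    exact expMul_integrableOn lam g _ _ (fun x hx => ⟨hx.1, by simp at hx ⊢; linarith [hx.2]⟩)
  rw [Real.fourierInv_eq']
  simp only [RCLike.inner_apply, conj_trivial, smul_eq_mul]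
  have hind : (fun v : ℝ => Complex.exp ((2 * Real.pi * (t * v) : ℝ) * Complex.I) * Gfun lam g v)
      = Set.indicator (Ioo (-lam) lam) (fun v => Complex.exp ((2 * Real.pi * t * v : ℝ) * Complex.I) * g v) := by
    ext v
    by_cases h : v ∈ Ioo (-lam) lam <;>
      simp [Gfun, Set.indicator_of_mem, Set.indicator_of_notMem, h, mul_comm v t, mul_assoc]
  rw [hind, integral_indicator measurableSet_Ioo, ← integral_Ioc_eq_integral_Ioo,
    ← intervalIntegral.integral_of_le (by linarith : (-lam) ≤ lam),
    ← intervalIntegral.integral_add_adjacent_intervals hint3 hint1]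
  have hneg : (∫ v in (-lam)..(0:ℝ), Complex.exp ((2 * Real.pi * t * v : ℝ) * Complex.I) * g v)
      = ∫ v in (0:ℝ)..lam, Complex.exp ((-(2 * Real.pi * t) * v : ℝ) * Complex.I) * g v := by
    have h0 := intervalIntegral.integral_comp_neg (a := (0:ℝ)) (b := lam)
      (fun v => Complex.exp ((2 * Real.pi * t * v : ℝ) * Complex.I) * g v)
    rw [neg_zero] at h0
    rw [← h0]
    apply intervalIntegral.integral_congr_ae
    filter_upwards [hge] with x hx _
    rw [hx]
    have harg : (2 * Real.pi * t * (-x) : ℝ) = (-(2 * Real.pi * t) * x : ℝ) := by ring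
    rw [harg]
  rw [hneg, ← intervalIntegral.integral_add hint2 hint1,
    ← intervalIntegral.integral_const_mul]
  apply intervalIntegral.integral_congr_ae
  filter_upwards with x _
  rw [← add_mul, key x, mul_assoc]

lemma Gfun_fourierInv_even (hlam : 0 < lam) (hge : ∀ᵐ x : ℝ, g (-x) = g x) (t : ℝ) :
    𝓕⁻ (Gfun lam g) (-t) = 𝓕⁻ (Gfun lam g) t := by
  rw [fourierInv_Gfun_eq lam g hlam hge, fourierInv_Gfun_eq lam g hlam hge]
  congr 1
  apply intervalIntegral.integral_congr
  intro s _
  have hc : Real.cos (2 * Real.pi * -t * s) = Real.cos (2 * Real.pi * t * s) := by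
    rw [show (2 * Real.pi * -t * s : ℝ) = -(2 * Real.pi * t * s) by ring, Real.cos_neg]
  simp only [hc]

lemma Gfun_fourier_eq (hlam : 0 < lam) (hge : ∀ᵐ x : ℝ, g (-x) = g x) :
    𝓕 (Gfun lam g) = 𝓕⁻ (Gfun lam g) := by
  ext t
  rw [← Gfun_fourierInv_even lam g hlam hge t, Real.fourierInv_eq_fourier_neg,
    neg_neg]

end BlambdaAux

section BlambdaAux2

open Real

lemma Blambda_mult_formula {f k : ℝ → ℂ} (hf : Integrable f volume) (hk : Integrable k volume) :
    ∫ ξ : ℝ, 𝓕 f ξ * k ξ = ∫ x : ℝ, f x * 𝓕 k x := by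
  have hLflip : (innerₗ ℝ).flip = innerₗ ℝ := by
    apply LinearMap.ext; intro v; apply LinearMap.ext; intro w
    simp [real_inner_comm]
  have h := VectorFourier.integral_fourierIntegral_smul_eq_flip (e := 𝐞)
    (L := innerₗ ℝ) (μ := (volume : Measure ℝ)) (ν := (volume : Measure ℝ))
    Real.continuous_fourierChar continuous_inner hf hk
  rw [hLflip] at h
  simp only [smul_eq_mul] at h
  exact h

lemma Blambda_contInv {f : ℝ → ℂ} (hf : Integrable f volume) : Continuous (𝓕⁻ f) := by
  rw [Real.fourierInv_eq_fourier_comp_neg]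
  exact VectorFourier.fourierIntegral_continuous Real.continuous_fourierChar
    (by exact continuous_inner) (hf.comp_neg)

lemma Blambda_boundInv {f : ℝ → ℂ} (w : ℝ) : ‖𝓕⁻ f w‖ ≤ ∫ v, ‖f v‖ := by
  rw [Real.fourierInv_eq_fourier_neg]
  exact VectorFourier.norm_fourierIntegral_le_integral_norm 𝐞 volume (innerₗ ℝ) f (-w)

lemma Blambda_expInt {χ : ℝ → ℂ} (hχ : Integrable χ volume) (c : ℝ) :
    Integrable (fun v : ℝ => Complex.exp ((c * v : ℝ) * Complex.I) * χ v) volume := by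
  apply hχ.bdd_mul
  · exact (Complex.continuous_exp.comp (by continuity)).aestronglyMeasurable
  · exact Filter.Eventually.of_forall (fun v => le_of_eq (Complex.norm_exp_ofReal_mul_I _))

lemma Blambda_delta_eval (lam : ℝ) {χ : ℝ → ℂ} (hχ : Integrable χ volume) :
    𝓕⁻ χ lam + 𝓕⁻ χ (-lam) = ∫ t : ℝ, (2 * Real.cos (2 * Real.pi * lam * t) : ℂ) * χ t := by
  have h1 : 𝓕⁻ χ lam = ∫ v : ℝ, Complex.exp ((2 * Real.pi * lam * v : ℝ) * Complex.I) * χ v := by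
    rw [Real.fourierInv_eq']
    simp only [RCLike.inner_apply, conj_trivial, smul_eq_mul]
    congr 1
    funext v
    rw [show (2 * Real.pi * (lam * v) : ℝ) = (2 * Real.pi * lam * v : ℝ) by ring]
  have h2 : 𝓕⁻ χ (-lam) = ∫ v : ℝ, Complex.exp ((-(2 * Real.pi * lam) * v : ℝ) * Complex.I) * χ v := by
    rw [Real.fourierInv_eq']
    simp only [RCLike.inner_apply, conj_trivial, smul_eq_mul]
    congr 1
    funext v
    rw [show (2 * Real.pi * (-lam * v) : ℝ) = (-(2 * Real.pi * lam) * v : ℝ) by ring]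
  rw [h1, h2, ← integral_add (Blambda_expInt hχ _) (Blambda_expInt hχ _)]
  congr 1
  funext v
  rw [← add_mul]
  congr 1
  rw [Complex.ofReal_cos, Complex.two_cos]
  push_cast
  ring_nf

end BlambdaAux2

/-- The distribution `B = δ_λ + δ_{−λ} + h₋` is Fourier anti-invariant and has the
Sonine property: it vanishes, together with its Fourier transform, on `(−λ,λ)`. -/
theorem Blambda_sonine (lam : ℝ) (hlam : 0 < lam)
    (F : Lp ℂ 2 (volume : Measure ℝ) ≃ₗᵢ[ℂ] Lp ℂ 2 (volume : Measure ℝ))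
    (hF : IsFourierPlancherel F)
    (g : Lp ℂ 2 (volume : Measure ℝ))
    (hge : ∀ᵐ x : ℝ, g (-x) = g x)
    (hgs : ∀ᵐ x : ℝ, x ∉ Ioo (-lam) lam → g x = 0)
    (hg : ∀ᵐ t : ℝ, g t - (Fop lam F g) t =
      Set.indicator (Ioo (-lam) lam)
        (fun s : ℝ => (2 * Real.cos (2 * Real.pi * lam * s) : ℂ)) t) :
    (∀ χ : SchwartzMap ℝ ℂ, Integrable (fun t : ℝ => hminus lam g t * χ t) volume) ∧
    (∀ χ : SchwartzMap ℝ ℂ,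
      pairingB lam (hminus lam g) (𝓕⁻ (χ : ℝ → ℂ)) =
        -pairingB lam (hminus lam g) (χ : ℝ → ℂ)) ∧
    (∀ χ : SchwartzMap ℝ ℂ, tsupport (χ : ℝ → ℂ) ⊆ Ioo (-lam) lam →
      pairingB lam (hminus lam g) (χ : ℝ → ℂ) = 0 ∧
      pairingB lam (hminus lam g) (𝓕⁻ (χ : ℝ → ℂ)) = 0) := by
  have hGint : Integrable (Gfun lam g) volume := Gfun_integrable lam g
  have hminus_eq : ∀ t : ℝ, hminus lam g t =
      -(2 * Real.cos (2 * Real.pi * lam * t) : ℂ) + Gfun lam g t - 𝓕⁻ (Gfun lam g) t := by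
    intro t
    rw [fourierInv_Gfun_eq lam g hlam hge t]
    rfl
  have intC : ∀ φ : SchwartzMap ℝ ℂ,
      Integrable (fun t : ℝ => (2 * Real.cos (2 * Real.pi * lam * t) : ℂ) * φ t) volume := by
    intro φ
    apply φ.integrable.bdd_mul (c := 2)
    · exact ((by continuity : Continuous fun t : ℝ =>
        (2 * Real.cos (2 * Real.pi * lam * t) : ℂ))).aestronglyMeasurable
    · refine Filter.Eventually.of_forall (fun x => ?_)
      rw [norm_mul]
      have h1 : ‖(2:ℂ)‖ = 2 := by norm_num
      have h2 : ‖(Real.cos (2 * Real.pi * lam * x) : ℂ)‖ ≤ 1 := by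
        rw [Complex.norm_real]
        exact Real.abs_cos_le_one _
      nlinarith [norm_nonneg ((Real.cos (2 * Real.pi * lam * x) : ℂ))]
  have intG : ∀ φ : SchwartzMap ℝ ℂ,
      Integrable (fun t : ℝ => Gfun lam g t * φ t) volume := by
    intro φ
    have h := hGint.bdd_mul φ.continuous.aestronglyMeasurable
      (Filter.Eventually.of_forall fun x => SchwartzMap.norm_le_seminorm ℝ φ x)
    exact h.congr (Filter.Eventually.of_forall fun x => mul_comm _ _)
  have intGh : ∀ φ : SchwartzMap ℝ ℂ,
      Integrable (fun t : ℝ => 𝓕⁻ (Gfun lam g) t * φ t) volume := fun φ =>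
    φ.integrable.bdd_mul (Blambda_contInv hGint).aestronglyMeasurable
      (Filter.Eventually.of_forall fun w => Blambda_boundInv w)
  have hsplit_fun : ∀ φ : SchwartzMap ℝ ℂ, (fun t : ℝ => hminus lam g t * φ t) =
      fun t : ℝ => (-((2 * Real.cos (2 * Real.pi * lam * t) : ℂ) * φ t)
        + Gfun lam g t * φ t) - 𝓕⁻ (Gfun lam g) t * φ t := by
    intro φ
    funext t
    rw [hminus_eq t]
    ring
  have inthm : ∀ φ : SchwartzMap ℝ ℂ,
      Integrable (fun t : ℝ => hminus lam g t * φ t) volume := by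
    intro φ
    rw [hsplit_fun φ]
    exact ((intC φ).neg.add (intG φ)).sub (intGh φ)
  have int_split : ∀ φ : SchwartzMap ℝ ℂ, (∫ t : ℝ, hminus lam g t * φ t) =
      -(∫ t : ℝ, (2 * Real.cos (2 * Real.pi * lam * t) : ℂ) * φ t)
        + (∫ t : ℝ, Gfun lam g t * φ t) - ∫ t : ℝ, 𝓕⁻ (Gfun lam g) t * φ t := by
    intro φ
    have i1 : Integrable (fun t : ℝ =>
        -((2 * Real.cos (2 * Real.pi * lam * t) : ℂ) * φ t)) volume := (intC φ).neg
    have i2 : Integrable (fun t : ℝ =>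
        -((2 * Real.cos (2 * Real.pi * lam * t) : ℂ) * φ t) + Gfun lam g t * φ t) volume :=
      i1.add (intG φ)
    rw [hsplit_fun φ, integral_sub i2 (intGh φ), integral_add i1 (intG φ), integral_neg]
  have parti : ∀ χ : SchwartzMap ℝ ℂ,
      pairingB lam (hminus lam g) (𝓕⁻ (χ : ℝ → ℂ)) =
        -pairingB lam (hminus lam g) (χ : ℝ → ℂ) := by
    intro χ
    set ψ : SchwartzMap ℝ ℂ := (FourierTransform.fourierCLE ℂ (SchwartzMap ℝ ℂ)).symm χ with hψdef
    have hψcoe : ⇑ψ = 𝓕⁻ ⇑χ := by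
        rw [hψdef, FourierTransform.fourierCLE_symm_apply, SchwartzMap.fourierInv_coe]
    have hFχint : Integrable (𝓕 ⇑χ) volume := by
      have h : Integrable (⇑(SchwartzMap.fourierTransformCLM ℂ χ)) volume :=
        (SchwartzMap.fourierTransformCLM ℂ χ).integrable
      rwa [SchwartzMap.fourierTransformCLM_apply, SchwartzMap.fourier_coe] at h
    have hinv : 𝓕 (𝓕⁻ ⇑χ) = ⇑χ := χ.continuous.fourier_fourierInv_eq χ.integrable hFχint
    have hψeval : ∀ w : ℝ, 𝓕⁻ (⇑ψ) w = χ (-w) := by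
      intro w
      rw [hψcoe, Real.fourierInv_eq_fourier_neg, hinv]
    have ha : ψ lam + ψ (-lam)
        = ∫ t : ℝ, (2 * Real.cos (2 * Real.pi * lam * t) : ℂ) * χ t := by
      rw [congrFun hψcoe lam, congrFun hψcoe (-lam)]
      exact Blambda_delta_eval lam χ.integrable
    have hb : (∫ t : ℝ, (2 * Real.cos (2 * Real.pi * lam * t) : ℂ) * ψ t)
        = χ (-lam) + χ lam := by
      have h := Blambda_delta_eval lam ψ.integrable
      rw [hψeval lam, hψeval (-lam), neg_neg] at h
      exact h.symm
    have hc : (∫ t : ℝ, Gfun lam g t * ψ t) = ∫ t : ℝ, 𝓕⁻ (Gfun lam g) t * χ t := by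
      have s1 : (∫ t : ℝ, Gfun lam g t * ψ t) = ∫ t : ℝ, Gfun lam g t * 𝓕 (⇑χ) (-t) := by
        refine integral_congr_ae (Filter.Eventually.of_forall fun t => ?_)
        show Gfun lam g t * ψ t = Gfun lam g t * 𝓕 (⇑χ) (-t)
        rw [congrFun hψcoe t, Real.fourierInv_eq_fourier_neg]
      have s2 := integral_neg_eq_self (fun t : ℝ => Gfun lam g (-t) * 𝓕 (⇑χ) t) volume
      simp only [neg_neg] at s2
      have s3 : (∫ t : ℝ, Gfun lam g (-t) * 𝓕 (⇑χ) t) = ∫ t : ℝ, Gfun lam g t * 𝓕 (⇑χ) t := by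
        apply integral_congr_ae
        filter_upwards [Gfun_even lam g hge] with x hx
        rw [hx]
      have s4 : (∫ t : ℝ, Gfun lam g t * 𝓕 (⇑χ) t) = ∫ t : ℝ, 𝓕 (⇑χ) t * Gfun lam g t := by
        exact integral_congr_ae (Filter.Eventually.of_forall fun t => mul_comm _ _)
      have s5 := Blambda_mult_formula χ.integrable hGint
      have s6 : (∫ x : ℝ, (χ : ℝ → ℂ) x * 𝓕 (Gfun lam g) x)
          = ∫ t : ℝ, 𝓕⁻ (Gfun lam g) t * χ t := by
        rw [Gfun_fourier_eq lam g hlam hge]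
        exact integral_congr_ae (Filter.Eventually.of_forall fun t => mul_comm _ _)
      rw [s1, s2, s3, s4, s5, s6]
    have hd : (∫ t : ℝ, 𝓕⁻ (Gfun lam g) t * ψ t) = ∫ t : ℝ, Gfun lam g t * χ t := by
      rw [← Gfun_fourier_eq lam g hlam hge, Blambda_mult_formula hGint ψ.integrable]
      refine integral_congr_ae (Filter.Eventually.of_forall fun x => ?_)
      show Gfun lam g x * 𝓕 (⇑ψ) x = Gfun lam g x * χ x
      rw [hψcoe, hinv]
    simp only [pairingB]
    rw [show 𝓕⁻ (χ : ℝ → ℂ) = ⇑ψ from hψcoe.symm]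
    rw [int_split ψ, int_split χ]
    linear_combination ha - hb + hc - hd
  refine ⟨inthm, parti, ?_⟩
  -- part (ii)
  have hMem : MemLp (Gfun lam g) 2 volume := (Lp.memLp g).indicator measurableSet_Ioo
  have hFP : ⇑(F (Pproj lam g)) =ᵐ[volume] 𝓕⁻ (Gfun lam g) := by
    have h := hF (Gfun lam g) hGint hMem
    have e : Pproj lam g = hMem.toLp (Gfun lam g) := rfl
    rwa [e]
  have hFop : ⇑(Fop lam F g) =ᵐ[volume]
      Set.indicator (Ioo (-lam) lam) (𝓕⁻ (Gfun lam g)) := by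
    have h1 : ⇑(Fop lam F g) =ᵐ[volume]
        Set.indicator (Ioo (-lam) lam) ⇑(F (Pproj lam g)) :=
      by unfold Fop Pproj; exact MemLp.coeFn_toLp _
    refine h1.trans ?_
    filter_upwards [hFP] with x hx
    by_cases hmem : x ∈ Ioo (-lam) lam
    · rw [Set.indicator_of_mem hmem, Set.indicator_of_mem hmem, hx]
    · rw [Set.indicator_of_notMem hmem, Set.indicator_of_notMem hmem]
  intro χ hsupp
  have hχlam : (χ : ℝ → ℂ) lam = 0 :=
    image_eq_zero_of_notMem_tsupport (fun h => lt_irrefl lam (hsupp h).2)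
  have hχneg : (χ : ℝ → ℂ) (-lam) = 0 :=
    image_eq_zero_of_notMem_tsupport (fun h => lt_irrefl (-lam) (hsupp h).1)
  have hzero : (fun t : ℝ => hminus lam g t * χ t) =ᵐ[volume] (fun _ => (0:ℂ)) := by
    filter_upwards [hg, hFop] with t h1t h2t
    by_cases hmem : t ∈ Ioo (-lam) lam
    · have hgt : Gfun lam g t = g t := Set.indicator_of_mem hmem _
      have hFt : (Fop lam F g) t = 𝓕⁻ (Gfun lam g) t := by
        rw [h2t, Set.indicator_of_mem hmem]
      have hct : (g : ℝ → ℂ) t - 𝓕⁻ (Gfun lam g) t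
          = (2 * Real.cos (2 * Real.pi * lam * t) : ℂ) := by
        rw [← hFt, h1t, Set.indicator_of_mem hmem]
      have hzt : hminus lam g t = 0 := by
        rw [hminus_eq t, hgt]
        linear_combination hct
      rw [hzt, zero_mul]
    · have hχt : (χ : ℝ → ℂ) t = 0 :=
        image_eq_zero_of_notMem_tsupport (fun h => hmem (hsupp h))
      rw [hχt, mul_zero]
  have hint0 : (∫ t : ℝ, hminus lam g t * χ t) = 0 := by
    rw [integral_congr_ae hzero, integral_zero]
  have hp1 : pairingB lam (hminus lam g) (χ : ℝ → ℂ) = 0 := by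
    simp only [pairingB]
    rw [hχlam, hχneg, hint0]
    ring
  exact ⟨hp1, by rw [parti χ, hp1, neg_zero]⟩
end
end
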